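/- Discrete Hilbert transform bound (Hilbert's inequality): Fix an integer n ≥ 2 and let u_1,…,u_n ∈ ℂ. Then |∑_{1 ≤ i ≠ j ≤ n} u_i · conj(u_j)/(i − j)| ≤ π · ∑_{i=1}^n |u_i|². Equivalently, the n × n matrix A with zero diagonal and entries a_{ij} = 1/(i − j) for i ≠ j, viewed as a linear operator on ℂ^n with the ℓ² norm, has operator norm at most π. -/

import Mathlib

open Real intervalIntegral

namespace HilbertAux

lemma hasDerivAt_cexp (c : ℂ) (x : ℝ) :
    HasDerivAt (fun y : ℝ => Complex.exp (c * y)) (c * Complex.exp (c * x)) x := by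
  have h : HasDerivAt (fun y : ℝ => c * (y : ℂ)) c x := by
    simpa only [mul_one, id_eq] using ((hasDerivAt_id (x : ℂ)).const_mul c).comp_ofReal
  simpa [mul_comm, Function.comp_def] using (Complex.hasDerivAt_exp (c * x)).comp x h

lemma continuous_cexp (c : ℂ) : Continuous fun x : ℝ => Complex.exp (c * x) := by
  fun_prop

lemma integral_exp_eq_zero {m : ℤ} (hm : m ≠ 0) :
    ∫ x in (0:ℝ)..(2*π), Complex.exp ((m : ℂ) * Complex.I * x) = 0 := by
  have hc : (m : ℂ) * Complex.I ≠ 0 := by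
    simp [Complex.I_ne_zero, hm]
  rw [integral_exp_mul_complex hc]
  have h1 : (m : ℂ) * Complex.I * ((2 * π : ℝ) : ℂ) = m * (2 * π * Complex.I) := by
    push_cast; ring
  rw [h1, Complex.exp_int_mul_two_pi_mul_I]
  simp

lemma integral_mul_exp {c : ℂ} (hc : c ≠ 0) (hone : Complex.exp (c * (2 * π)) = 1) :
    ∫ x in (0:ℝ)..(2*π), (x : ℂ) * Complex.exp (c * x) = 2 * π / c := by
  have D : ∀ x : ℝ, HasDerivAt (fun y : ℝ => ((y : ℂ) / c - 1 / c ^ 2) * Complex.exp (c * y))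
      ((x : ℂ) * Complex.exp (c * x)) x := by
    intro x
    have h1 : HasDerivAt (fun y : ℝ => (y : ℂ) / c - 1 / c ^ 2) (1 / c) x := by
      have := (((hasDerivAt_id (x : ℂ)).div_const c).sub_const (1 / c ^ 2)).comp_ofReal
      simpa [one_div] using this
    have := h1.fun_mul (hasDerivAt_cexp c x)
    refine this.congr_deriv ?_
    field_simp
    ring
  rw [intervalIntegral.integral_eq_sub_of_hasDerivAt (fun x _ => D x)
    (((Complex.continuous_ofReal.mul (continuous_cexp c))).intervalIntegrable _ _)]
  push_cast
  rw [hone]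
  rw [mul_zero, Complex.exp_zero]
  field_simp
  ring

/-- The key Fourier coefficient: `∫₀^{2π} (π - x) e^{imx} dx`. -/
noncomputable def coeff (m : ℤ) : ℂ :=
  ∫ x in (0:ℝ)..(2*π), ((π : ℂ) - x) * Complex.exp ((m : ℂ) * Complex.I * x)

lemma coeff_zero : coeff 0 = 0 := by
  unfold coeff
  simp only [Int.cast_zero, zero_mul, Complex.exp_zero, mul_one]
  have : ∀ x : ℝ, ((π : ℂ) - x) = ((π - x : ℝ) : ℂ) := by intro x; push_cast; ring
  simp_rw [this, intervalIntegral.integral_ofReal]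
  have : ∫ x in (0:ℝ)..(2*π), (π - x) = 0 := by
    rw [intervalIntegral.integral_sub intervalIntegrable_const
      (intervalIntegral.intervalIntegrable_id)]
    simp
    ring
  rw [this, Complex.ofReal_zero]

lemma coeff_ne_zero {m : ℤ} (hm : m ≠ 0) : coeff m = 2 * π * Complex.I / m := by
  unfold coeff
  have hc : (m : ℂ) * Complex.I ≠ 0 := by simp [Complex.I_ne_zero, hm]
  have hone : Complex.exp ((m : ℂ) * Complex.I * (2 * π)) = 1 := by
    have h1 : (m : ℂ) * Complex.I * (2 * π) = m * (2 * π * Complex.I) := by ring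
    rw [h1, Complex.exp_int_mul_two_pi_mul_I]
  have hsub : ∀ x : ℝ, ((π : ℂ) - x) * Complex.exp ((m : ℂ) * Complex.I * x)
      = (π : ℂ) * Complex.exp ((m : ℂ) * Complex.I * x)
        - (x : ℂ) * Complex.exp ((m : ℂ) * Complex.I * x) := by intro x; ring
  simp_rw [hsub]
  rw [intervalIntegral.integral_sub, intervalIntegral.integral_const_mul,
    integral_exp_eq_zero hm, integral_mul_exp hc hone]
  · rw [mul_zero, zero_sub]
    have hm' : (m : ℂ) ≠ 0 := by simp [hm]
    field_simp
    ring_nf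
    rw [Complex.I_sq]
  · exact ((continuous_const.mul (continuous_cexp _))).intervalIntegrable _ _
  · exact ((Complex.continuous_ofReal.mul (continuous_cexp _))).intervalIntegrable _ _

noncomputable def f (n : ℕ) (u : Fin n → ℂ) (x : ℝ) : ℂ :=
  ∑ k : Fin n, u k * Complex.exp (((k : ℕ) : ℂ) * Complex.I * x)

lemma continuous_f (n : ℕ) (u : Fin n → ℂ) : Continuous (f n u) := by
  unfold f
  exact continuous_finset_sum _ fun k _ => continuous_const.mul (by fun_prop)

lemma f_mul_conj (n : ℕ) (u : Fin n → ℂ) (x : ℝ) :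
    f n u x * (starRingEnd ℂ) (f n u x)
      = ∑ i : Fin n, ∑ j : Fin n, u i * (starRingEnd ℂ) (u j) *
          Complex.exp (((((i : ℕ) : ℤ) - ((j : ℕ) : ℤ) : ℤ) : ℂ) * Complex.I * x) := by
  unfold f
  rw [map_sum, Finset.sum_mul_sum]
  refine Finset.sum_congr rfl fun i _ => Finset.sum_congr rfl fun j _ => ?_
  rw [map_mul]
  have h1 : (starRingEnd ℂ) (Complex.exp (((j : ℕ) : ℂ) * Complex.I * x)) =
      Complex.exp (-(((j : ℕ) : ℂ) * Complex.I * x)) := by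
    rw [← Complex.exp_conj]
    congr 1
    simp [Complex.conj_I, Complex.conj_ofReal]
  rw [h1, mul_mul_mul_comm, ← Complex.exp_add]
  congr 2
  push_cast
  ring

lemma integral_expand (n : ℕ) (u : Fin n → ℂ) (w : ℝ → ℂ) (hw : Continuous w) :
    ∫ x in (0:ℝ)..(2*π), w x * (f n u x * (starRingEnd ℂ) (f n u x))
      = ∑ i : Fin n, ∑ j : Fin n, u i * (starRingEnd ℂ) (u j) *
          ∫ x in (0:ℝ)..(2*π),
            w x * Complex.exp (((((i : ℕ) : ℤ) - ((j : ℕ) : ℤ) : ℤ) : ℂ) * Complex.I * x) := by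
  have h1 : ∀ x : ℝ, w x * (f n u x * (starRingEnd ℂ) (f n u x))
      = ∑ i : Fin n, ∑ j : Fin n, u i * (starRingEnd ℂ) (u j) *
          (w x * Complex.exp (((((i : ℕ) : ℤ) - ((j : ℕ) : ℤ) : ℤ) : ℂ) * Complex.I * x)) := by
    intro x
    rw [f_mul_conj n u x, Finset.mul_sum]
    refine Finset.sum_congr rfl fun i _ => ?_
    rw [Finset.mul_sum]
    refine Finset.sum_congr rfl fun j _ => ?_
    ring
  simp only [h1]
  rw [intervalIntegral.integral_finset_sum]
  · refine Finset.sum_congr rfl fun i _ => ?_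
    rw [intervalIntegral.integral_finset_sum]
    · refine Finset.sum_congr rfl fun j _ => ?_
      rw [intervalIntegral.integral_const_mul]
    · intro j _
      exact (Continuous.intervalIntegrable (by fun_prop) _ _)
  · intro i _
    exact (Continuous.intervalIntegrable
      (continuous_finset_sum _ fun j _ => by fun_prop) _ _)


lemma integral_exp_eq (m : ℤ) :
    ∫ x in (0:ℝ)..(2*π), Complex.exp ((m : ℂ) * Complex.I * x)
      = if m = 0 then ((2*π : ℝ) : ℂ) else 0 := by
  by_cases hm : m = 0
  · simp [hm]
  · simp [hm, integral_exp_eq_zero hm]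

lemma fin_sub_ne_zero {n : ℕ} {i j : Fin n} (h : i ≠ j) :
    (((i : ℕ) : ℤ) - ((j : ℕ) : ℤ)) ≠ 0 := by
  rw [sub_ne_zero]
  exact_mod_cast fun hh => h (Fin.ext (by exact_mod_cast hh))

end HilbertAux

open HilbertAux

/-- Discrete Hilbert transform bound (Hilbert's inequality). -/
theorem discrete_hilbert_transform_bound (n : ℕ) (hn : 2 ≤ n) (u : Fin n → ℂ) :
    ‖∑ i : Fin n, ∑ j : Fin n,
        if i ≠ j then u i * (starRingEnd ℂ) (u j) / (((i : ℕ) : ℂ) - ((j : ℕ) : ℂ)) else 0‖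
      ≤ π * ∑ i : Fin n, ‖u i‖ ^ 2 := by
  set S := ∑ i : Fin n, ∑ j : Fin n,
      if i ≠ j then u i * (starRingEnd ℂ) (u j) / (((i : ℕ) : ℂ) - ((j : ℕ) : ℂ)) else 0 with hSdef
  have key1 : ∫ x in (0:ℝ)..(2*π), ((π : ℂ) - x) * (f n u x * (starRingEnd ℂ) (f n u x))
      = 2 * π * Complex.I * S := by
    rw [integral_expand n u (fun x => (π : ℂ) - x) (by fun_prop)]
    rw [hSdef, Finset.mul_sum]
    refine Finset.sum_congr rfl fun i _ => ?_
    rw [Finset.mul_sum]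
    refine Finset.sum_congr rfl fun j _ => ?_
    have hco : (∫ x in (0:ℝ)..(2*π), ((π : ℂ) - x) *
        Complex.exp (((((i : ℕ) : ℤ) - ((j : ℕ) : ℤ) : ℤ) : ℂ) * Complex.I * x))
        = coeff (((i : ℕ) : ℤ) - ((j : ℕ) : ℤ)) := rfl
    rw [hco]
    by_cases h : i = j
    · subst h
      simp [coeff_zero]
    · rw [coeff_ne_zero (fin_sub_ne_zero h), if_pos h]
      have hcast : ((((i : ℕ) : ℤ) - ((j : ℕ) : ℤ) : ℤ) : ℂ) = ((i : ℕ) : ℂ) - ((j : ℕ) : ℂ) := by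
        push_cast; ring
      rw [hcast]
      ring
  have key2 : ∫ x in (0:ℝ)..(2*π), (f n u x * (starRingEnd ℂ) (f n u x))
      = ((2 * π * ∑ i : Fin n, ‖u i‖ ^ 2 : ℝ) : ℂ) := by
    have h := integral_expand n u (fun _ => 1) continuous_const
    simp only [one_mul] at h
    rw [h]
    have hterm : ∀ i : Fin n, (∑ j : Fin n, u i * (starRingEnd ℂ) (u j) *
        ∫ x in (0:ℝ)..(2*π),
          Complex.exp (((((i : ℕ) : ℤ) - ((j : ℕ) : ℤ) : ℤ) : ℂ) * Complex.I * x))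
        = ((2 * π * ‖u i‖ ^ 2 : ℝ) : ℂ) := by
      intro i
      rw [Finset.sum_eq_single i]
      · rw [integral_exp_eq, if_pos (by ring), Complex.mul_conj']
        push_cast [Complex.normSq_eq_norm_sq]
        ring
      · intro j _ hj
        rw [integral_exp_eq, if_neg (fin_sub_ne_zero (Ne.symm hj)), mul_zero]
      · intro hi
        exact absurd (Finset.mem_univ i) hi
    rw [Finset.sum_congr rfl fun i _ => hterm i]
    push_cast
    rw [Finset.mul_sum]
  have habs2 : ∫ x in (0:ℝ)..(2*π), ‖f n u x‖ ^ 2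
      = 2 * π * ∑ i : Fin n, ‖u i‖ ^ 2 := by
    have hpoint : ∀ x : ℝ, f n u x * (starRingEnd ℂ) (f n u x)
        = ((‖f n u x‖ ^ 2 : ℝ) : ℂ) := by
      intro x
      rw [Complex.mul_conj']
      push_cast [Complex.normSq_eq_norm_sq]
      rfl
    apply Complex.ofReal_injective
    rw [← intervalIntegral.integral_ofReal]
    simp_rw [← hpoint]
    exact key2
  have hIf : IntervalIntegrable (fun x : ℝ => ‖f n u x‖ ^ 2)
      MeasureTheory.volume 0 (2*π) := by
    apply Continuous.intervalIntegrable
    have := (continuous_f n u).norm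
    exact this.pow 2
  have hbound : ‖2 * π * Complex.I * S‖
      ≤ π * (2 * π * ∑ i : Fin n, ‖u i‖ ^ 2) := by
    rw [← key1]
    have h2pi : (0:ℝ) ≤ 2*π := by linarith [pi_pos]
    have step1 : ‖∫ x in (0:ℝ)..(2*π),
          ((π : ℂ) - x) * (f n u x * (starRingEnd ℂ) (f n u x))‖
        ≤ ∫ x in (0:ℝ)..(2*π),
            ‖((π : ℂ) - x) * (f n u x * (starRingEnd ℂ) (f n u x))‖ :=
      intervalIntegral.norm_integral_le_integral_norm h2pi
    refine step1.trans ?_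
    have step2 : ∫ x in (0:ℝ)..(2*π),
          ‖((π : ℂ) - x) * (f n u x * (starRingEnd ℂ) (f n u x))‖
        ≤ ∫ x in (0:ℝ)..(2*π), π * ‖f n u x‖ ^ 2 := by
      apply intervalIntegral.integral_mono_on h2pi
      · apply Continuous.intervalIntegrable
        have h1 : Continuous fun x : ℝ =>
            ((π : ℂ) - x) * (f n u x * (starRingEnd ℂ) (f n u x)) := by
          have hf := continuous_f n u
          have hconj : Continuous fun x : ℝ => (starRingEnd ℂ) (f n u x) :=
            Complex.continuous_conj.comp hf
          exact (continuous_const.sub Complex.continuous_ofReal).mul (hf.mul hconj)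
        simpa using h1.norm
      · exact hIf.const_mul π
      · intro x hx
        rw [Set.mem_Icc] at hx
        rw [norm_mul, norm_mul]
        have h1 : ‖(π : ℂ) - x‖ ≤ π := by
          have hh : ((π : ℂ) - x) = ((π - x : ℝ) : ℂ) := by push_cast; ring
          rw [hh, Complex.norm_real, Real.norm_eq_abs, abs_le]
          constructor
          · nlinarith [hx.1, hx.2]
          · nlinarith [hx.1]
        have h2 : ‖f n u x‖ * ‖(starRingEnd ℂ) (f n u x)‖
            = ‖f n u x‖ ^ 2 := by
          rw [Complex.norm_conj]; ring
        rw [h2]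
        exact mul_le_mul_of_nonneg_right h1 (by positivity)
    refine step2.trans ?_
    rw [intervalIntegral.integral_const_mul, habs2]
  have hexpand : ‖2 * π * Complex.I * S‖ = 2 * π * ‖S‖ := by
    rw [norm_mul, norm_mul, norm_mul, Complex.norm_I]
    rw [Complex.norm_two, Complex.norm_real, Real.norm_eq_abs, abs_of_pos pi_pos]
    ring
  rw [hexpand] at hbound
  nlinarith [norm_nonneg S, pi_pos]
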